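/- Let q be a prime power with gcd(n, q-1) = 1, and let f₁(x,y) = a₁xⁿ + a₂x^{n-1}y + ⋯ + a_n x y^{n-1} and f₂(x,y) = b₁xⁿ + ⋯ + b_n x y^{n-1} + b_{n+1}yⁿ be coprime homogeneous polynomials of degree n over 𝔽_q. Then (f₁, f₂) induces a bijection of 𝔽_q² if and only if the rational function t ↦ f₁(1,t)/f₂(1,t) induces a bijection of the projective line ℙ¹(𝔽_q) = 𝔽_q ∪ {∞}. -/

import Mathlib

open MvPolynomial

lemma auxEval {F : Type*} [Field F] (n m : ℕ) (c : Fin m → F) (x y : F) :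
    eval ![x, y] (∑ i : Fin m, C (c i) * X 0 ^ (n - (i : ℕ)) * X 1 ^ (i : ℕ)) =
      ∑ i : Fin m, c i * x ^ (n - (i : ℕ)) * y ^ (i : ℕ) := by
  simp [map_sum]

lemma auxHomog {F : Type*} [Field F] (n m : ℕ) (hm : ∀ i : Fin m, (i : ℕ) ≤ n)
    (c : Fin m → F) (k x y : F) :
    (∑ i : Fin m, c i * (k * x) ^ (n - (i : ℕ)) * (k * y) ^ (i : ℕ)) =
      k ^ n * ∑ i : Fin m, c i * x ^ (n - (i : ℕ)) * y ^ (i : ℕ) := by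
  rw [Finset.mul_sum]
  refine Finset.sum_congr rfl fun i _ => ?_
  have h : k ^ (n - (i : ℕ)) * k ^ (i : ℕ) = k ^ n := by
    rw [← pow_add, Nat.sub_add_cancel (hm i)]
  rw [mul_pow, mul_pow, ← h]; ring

lemma auxDvd {F : Type*} [Field F] (n m : ℕ) (hm : ∀ i : Fin m, (i : ℕ) ≤ n)
    (c : Fin m → F) (t : F) (h : ∑ i : Fin m, c i * t ^ (i : ℕ) = 0) :
    (X 1 - C t * X 0 : MvPolynomial (Fin 2) F) ∣
      ∑ i : Fin m, C (c i) * X 0 ^ (n - (i : ℕ)) * X 1 ^ (i : ℕ) := by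
  have key : (∑ i : Fin m, C (c i) * X 0 ^ (n - (i : ℕ)) * X 1 ^ (i : ℕ) : MvPolynomial (Fin 2) F)
      = (∑ i : Fin m, C (c i) * X 0 ^ (n - (i : ℕ)) * (X 1 ^ (i : ℕ) - (C t * X 0) ^ (i : ℕ)))
        + C (∑ i : Fin m, c i * t ^ (i : ℕ)) * X 0 ^ n := by
    rw [map_sum, Finset.sum_mul, ← Finset.sum_add_distrib]
    refine Finset.sum_congr rfl fun i _ => ?_
    have hx : (X 0 : MvPolynomial (Fin 2) F) ^ (n - (i : ℕ)) * X 0 ^ (i : ℕ) = X 0 ^ n := by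
      rw [← pow_add, Nat.sub_add_cancel (hm i)]
    rw [map_mul, map_pow, ← hx]; ring
  rw [key, h, map_zero, zero_mul, add_zero]
  exact Finset.dvd_sum fun i _ => (sub_dvd_pow_sub_pow (X 1) (C t * X 0) (i : ℕ)).mul_left _

lemma powBij {F : Type*} [Field F] [Fintype F] [DecidableEq F] (n : ℕ) (hn : 0 < n)
    (hgcd : Nat.gcd n (Fintype.card F - 1) = 1) :
    Function.Bijective (fun c : F => c ^ n) := by
  have hco : (Nat.card Fˣ).Coprime n := by
    rw [Nat.card_eq_fintype_card, Fintype.card_units]; exact Nat.Coprime.symm hgcd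
  have hu := hco.pow_left_bijective
  constructor
  · intro cc d h
    simp only at h
    by_cases hc : cc = 0
    · subst hc; rw [zero_pow hn.ne'] at h
      exact (pow_eq_zero_iff hn.ne').mp h.symm |>.symm
    · by_cases hd : d = 0
      · subst hd; rw [zero_pow hn.ne'] at h
        exact absurd ((pow_eq_zero_iff hn.ne').mp h) hc
      · have := hu.injective (a₁ := Units.mk0 cc hc) (a₂ := Units.mk0 d hd)
          (by ext; simpa using h)
        simpa using congrArg Units.val this
  · intro x
    by_cases hx : x = 0
    · exact ⟨0, by simp [zero_pow hn.ne', hx]⟩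
    · obtain ⟨u, hu'⟩ := hu.surjective (Units.mk0 x hx)
      exact ⟨u, by simpa using congrArg Units.val hu'⟩

def proj {F : Type*} [Field F] [DecidableEq F] (p : F × F) : Option F :=
  if p.2 = 0 then none else some (p.1 / p.2)

lemma proj_fiber {F : Type*} [Field F] [DecidableEq F] {p q : F × F}
    (hp : p ≠ 0) (hq : q ≠ 0) (h : proj p = proj q) :
    ∃ c : F, c ≠ 0 ∧ q = (c * p.1, c * p.2) := by
  obtain ⟨u, w⟩ := p; obtain ⟨u', w'⟩ := q
  by_cases hw : w = 0
  · by_cases hw' : w' = 0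
    · subst hw; subst hw'
      have hu : u ≠ 0 := by simpa [Prod.ext_iff] using hp
      have hu' : u' ≠ 0 := by simpa [Prod.ext_iff] using hq
      exact ⟨u' / u, div_ne_zero hu' hu, by simp [div_mul_cancel₀ _ hu]⟩
    · simp [proj, hw, hw'] at h
  · by_cases hw' : w' = 0
    · simp [proj, hw, hw'] at h
    · simp only [proj, hw, hw', if_neg, if_false, Option.some.injEq] at h
      refine ⟨w' / w, div_ne_zero hw' hw, ?_⟩
      have h1 : w' / w * u = u' := by
        field_simp at h ⊢
        linear_combination h
      have h2 : w' / w * w = w' := div_mul_cancel₀ _ hw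
      simp [h1, h2]

lemma proj_smul {F : Type*} [Field F] [DecidableEq F] (c : F) (hc : c ≠ 0) (p : F × F) :
    proj (c * p.1, c * p.2) = proj p := by
  unfold proj
  by_cases h : p.2 = 0
  · simp [h]
  · simp [h, hc, mul_div_mul_left _ _ hc]

/-- Corollary 3.7: for gcd(n, q-1) = 1 and coprime homogeneous degree-n forms
f₁ = a₁xⁿ + ⋯ + a_n x y^{n-1} (no yⁿ term) and f₂ = b₁xⁿ + ⋯ + b_{n+1}yⁿ over 𝔽_q,
the system (f₁, f₂) is a bijection of 𝔽_q² iff the rational function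
t ↦ f₁(1,t)/f₂(1,t) is a bijection of ℙ¹(𝔽_q) = 𝔽_q ∪ {∞}.  Here ℙ¹(𝔽_q) is modeled
as `Option F` with `none` = ∞, and the induced map sends a finite t with
f₂(1,t) = 0 to ∞, and ∞ to 0 (the value of the rational function at ∞, since x
divides f₁ and b_{n+1} ≠ 0 by coprimality; the degenerate branch b_{n+1} = 0 is
sent to ∞ but cannot occur under the coprimality hypothesis). -/
theorem stmt_9 {F : Type*} [Field F] [Fintype F] [DecidableEq F]
    (n : ℕ) (hn : 0 < n) (hgcd : Nat.gcd n (Fintype.card F - 1) = 1)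
    (a : Fin n → F) (b : Fin (n + 1) → F) (f₁ f₂ : MvPolynomial (Fin 2) F)
    (hf₁ : f₁ = ∑ i : Fin n, C (a i) * X 0 ^ (n - (i : ℕ)) * X 1 ^ (i : ℕ))
    (hf₂ : f₂ = ∑ i : Fin (n + 1), C (b i) * X 0 ^ (n - (i : ℕ)) * X 1 ^ (i : ℕ))
    (hcop : ∀ d : MvPolynomial (Fin 2) F, d ∣ f₁ → d ∣ f₂ → IsUnit d) :
    Function.Bijective (fun p : F × F =>
      (eval ![p.1, p.2] f₁, eval ![p.1, p.2] f₂)) ↔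
    Function.Bijective (fun t : Option F =>
      match t with
      | none => if b (Fin.last n) = 0 then none else some (0 : F)
      | some t =>
          if eval ![1, t] f₂ = 0 then none
          else some (eval ![1, t] f₁ / eval ![1, t] f₂)) := by
  classical
  have him : ∀ i : Fin n, (i : ℕ) ≤ n := fun i => i.isLt.le
  have him' : ∀ i : Fin (n + 1), (i : ℕ) ≤ n := fun i => Fin.is_le i
  have e1 : ∀ x y : F, eval ![x, y] f₁ = ∑ i : Fin n, a i * x ^ (n - (i : ℕ)) * y ^ (i : ℕ) :=
    fun x y => by rw [hf₁, auxEval]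
  have e2 : ∀ x y : F,
      eval ![x, y] f₂ = ∑ i : Fin (n + 1), b i * x ^ (n - (i : ℕ)) * y ^ (i : ℕ) :=
    fun x y => by rw [hf₂, auxEval]
  have hom1 : ∀ k x y : F, eval ![k * x, k * y] f₁ = k ^ n * eval ![x, y] f₁ :=
    fun k x y => by rw [e1, e1, auxHomog n n him]
  have hom2 : ∀ k x y : F, eval ![k * x, k * y] f₂ = k ^ n * eval ![x, y] f₂ :=
    fun k x y => by rw [e2, e2, auxHomog n (n + 1) him']
  have hbn : b (Fin.last n) ≠ 0 := by
    intro h0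
    have d1 : (X 0 : MvPolynomial (Fin 2) F) ∣ f₁ := by
      rw [hf₁]
      exact Finset.dvd_sum fun i _ =>
        ((dvd_pow_self (X 0) (Nat.sub_ne_zero_of_lt i.isLt)).mul_left _).mul_right _
    have d2 : (X 0 : MvPolynomial (Fin 2) F) ∣ f₂ := by
      rw [hf₂]
      refine Finset.dvd_sum fun i _ => ?_
      rcases eq_or_ne i (Fin.last n) with hi | hi
      · rw [hi, h0, map_zero, zero_mul, zero_mul]; exact dvd_zero _
      · exact ((dvd_pow_self (X 0)
          (Nat.sub_ne_zero_of_lt (Fin.val_lt_last hi))).mul_left _).mul_right _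
    have hu := (hcop _ d1 d2).map (eval (fun _ => (0 : F)))
    rw [eval_X] at hu
    exact not_isUnit_zero hu
  have f1zero : ∀ y : F, eval ![(0 : F), y] f₁ = 0 := by
    intro y; rw [e1]
    refine Finset.sum_eq_zero fun i _ => ?_
    rw [zero_pow (Nat.sub_ne_zero_of_lt i.isLt)]; ring
  have f2zero : ∀ y : F, eval ![(0 : F), y] f₂ = b (Fin.last n) * y ^ n := by
    intro y; rw [e2]
    rw [Finset.sum_eq_single (Fin.last n)]
    · simp [Fin.val_last]
    · intro i _ hi
      rw [zero_pow (Nat.sub_ne_zero_of_lt (Fin.val_lt_last hi))]; ring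
    · intro hmem; exact absurd (Finset.mem_univ _) hmem
  set Φ : F × F → F × F := fun p => (eval ![p.1, p.2] f₁, eval ![p.1, p.2] f₂) with hΦ
  set Ψ : Option F → Option F := fun t =>
      match t with
      | none => if b (Fin.last n) = 0 then none else some (0 : F)
      | some t =>
          if eval ![1, t] f₂ = 0 then none
          else some (eval ![1, t] f₁ / eval ![1, t] f₂) with hΨ
  have pb := powBij (F := F) n hn hgcd
  have nz : ∀ v : F × F, v ≠ 0 → Φ v ≠ 0 := by
    rintro ⟨x, y⟩ hv h
    rw [Prod.ext_iff] at h
    obtain ⟨h1, h2⟩ := h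
    simp only [hΦ] at h1 h2
    by_cases hx : x = 0
    · subst hx
      have hy : y ≠ 0 := by simpa [Prod.ext_iff] using hv
      rw [f2zero] at h2
      rcases mul_eq_zero.mp h2 with h | h
      · exact hbn h
      · exact pow_ne_zero n hy h
    · have hxy : x * (y / x) = y := by field_simp
      have g1 : eval ![(1 : F), y / x] f₁ = 0 := by
        have hh := hom1 x 1 (y / x)
        rw [mul_one, hxy, h1] at hh
        exact ((mul_eq_zero.mp hh.symm).resolve_left (pow_ne_zero n hx))
      have g2 : eval ![(1 : F), y / x] f₂ = 0 := by
        have hh := hom2 x 1 (y / x)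
        rw [mul_one, hxy, h2] at hh
        exact ((mul_eq_zero.mp hh.symm).resolve_left (pow_ne_zero n hx))
      have hsum1 : ∑ i : Fin n, a i * (y / x) ^ (i : ℕ) = 0 := by
        rw [e1] at g1; simpa using g1
      have hsum2 : ∑ i : Fin (n + 1), b i * (y / x) ^ (i : ℕ) = 0 := by
        rw [e2] at g2; simpa using g2
      have dv1 : (X 1 - C (y / x) * X 0 : MvPolynomial (Fin 2) F) ∣ f₁ := by
        rw [hf₁]; exact auxDvd n n him a (y / x) hsum1
      have dv2 : (X 1 - C (y / x) * X 0 : MvPolynomial (Fin 2) F) ∣ f₂ := by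
        rw [hf₂]; exact auxDvd n (n + 1) him' b (y / x) hsum2
      have hu := (hcop _ dv1 dv2).map (eval ![(1 : F), y / x])
      simp at hu
  have scale : ∀ (c : F) (v : F × F),
      Φ (c * v.1, c * v.2) = (c ^ n * (Φ v).1, c ^ n * (Φ v).2) := by
    intro c v
    simp only [hΦ]
    rw [hom1, hom2]
  have Φ0 : Φ (0, 0) = 0 := by
    have := f2zero 0
    rw [zero_pow hn.ne', mul_zero] at this
    simp only [hΦ]
    rw [f1zero, this]
    rfl
  have base_some : ∀ t : F, Ψ (some t) = proj (Φ (1, t)) := fun t => rfl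
  have base_none : Ψ none = proj (Φ (0, 1)) := by
    show (if b (Fin.last n) = 0 then none else some (0 : F)) = _
    rw [if_neg hbn]
    have h : Φ ((0 : F), (1 : F)) = (0, b (Fin.last n)) := by
      simp only [hΦ]
      rw [f1zero, f2zero, one_pow, mul_one]
    rw [h]
    simp [proj, hbn]
  have rel : ∀ v : F × F, v ≠ 0 → Ψ (proj (v.2, v.1)) = proj (Φ v) := by
    rintro ⟨x, y⟩ hv
    by_cases hx : x = 0
    · subst hx
      have hy : y ≠ 0 := by simpa [Prod.ext_iff] using hv
      rw [show proj ((y : F), (0 : F)) = none from by simp [proj], base_none]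
      have h2 : Φ ((0 : F), y) = (y ^ n * (Φ (0, 1)).1, y ^ n * (Φ (0, 1)).2) := by
        have := scale y (0, 1)
        rw [mul_zero, mul_one] at this
        exact this
      rw [h2, proj_smul _ (pow_ne_zero n hy)]
    · rw [show proj (y, x) = some (y / x) from by simp [proj, hx], base_some]
      have hxy : x * (y / x) = y := by field_simp
      have h2 : Φ (x, y) = (x ^ n * (Φ (1, y / x)).1, x ^ n * (Φ (1, y / x)).2) := by
        have := scale x (1, y / x)
        rw [mul_one, hxy] at this
        exact this
      rw [h2, proj_smul _ (pow_ne_zero n hx)]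
  rw [← Finite.injective_iff_bijective, ← Finite.injective_iff_bijective]
  constructor
  · intro hinj p p' hpp
    have hrep : ∀ p : Option F, ∃ v : F × F, v ≠ 0 ∧ Ψ p = proj (Φ v) ∧ proj (v.2, v.1) = p := by
      intro p
      cases p with
      | none => exact ⟨(0, 1), by simp [Prod.ext_iff], base_none, by simp [proj]⟩
      | some t => exact ⟨(1, t), by simp [Prod.ext_iff], base_some t, by simp [proj]⟩
    obtain ⟨v, hv0, hv1, hv2⟩ := hrep p
    obtain ⟨w, hw0, hw1, hw2⟩ := hrep p'
    rw [hv1, hw1] at hpp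
    obtain ⟨c, hc, hcw⟩ := proj_fiber (nz v hv0) (nz w hw0) hpp
    obtain ⟨d, hd⟩ := pb.surjective c
    simp only at hd
    have hdne : d ≠ 0 := by
      rintro rfl
      rw [zero_pow hn.ne'] at hd
      exact hc hd.symm
    have hΦdw : Φ (d * v.1, d * v.2) = Φ w := by
      rw [scale d v, hd, ← hcw]
    have heq := hinj hΦdw
    rw [← hv2, ← hw2, ← heq]
    exact (proj_smul d hdne (v.2, v.1)).symm
  · intro hinj v w hvw
    by_cases hv0 : v = 0
    · subst hv0
      by_cases hw0 : w = 0
      · exact hw0.symm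
      · exact absurd (hvw.symm.trans (show Φ (0, 0) = 0 from Φ0)) (nz w hw0)
    · by_cases hw0 : w = 0
      · subst hw0
        exact absurd (hvw.trans (show Φ (0, 0) = 0 from Φ0)) (nz v hv0)
      · have hπ : proj (v.2, v.1) = proj (w.2, w.1) :=
          hinj (by rw [rel v hv0, rel w hw0, hvw])
        have hv0' : ((v.2, v.1) : F × F) ≠ 0 := fun h =>
          hv0 (Prod.ext (congrArg Prod.snd h) (congrArg Prod.fst h))
        have hw0' : ((w.2, w.1) : F × F) ≠ 0 := fun h =>
          hw0 (Prod.ext (congrArg Prod.snd h) (congrArg Prod.fst h))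
        obtain ⟨c, hc, hcw⟩ := proj_fiber hv0' hw0' hπ
        have hw' : w = (c * v.1, c * v.2) := by
          rw [Prod.ext_iff] at hcw ⊢
          exact ⟨hcw.2, hcw.1⟩
        have hΦw : Φ w = (c ^ n * (Φ v).1, c ^ n * (Φ v).2) := by
          rw [hw', scale c v]
        rw [hvw] at hΦw
        have hcn : c ^ n = 1 := by
          have hne := nz w hw0
          rw [Prod.ext_iff] at hΦw
          by_cases h1 : (Φ w).1 = 0
          · have h2 : (Φ w).2 ≠ 0 := by
              intro h2
              exact hne (Prod.ext h1 h2)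
            exact mul_right_cancel₀ h2 (by rw [one_mul]; exact hΦw.2.symm)
          · exact mul_right_cancel₀ h1 (by rw [one_mul]; exact hΦw.1.symm)
        have hc1 : c = 1 := pb.injective (by simp [hcn])
        rw [hw', hc1]
        simp
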